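/- If f : X → Y and f' : X' → Y' are continuous maps and Y × Y' is a normal topological space, then genus(f × f') ≤ genus(f) + genus(f'), where genus denotes the (normalized) Schwarz genus. -/

import Mathlib

noncomputable section


/-- The space of "multipaths": `n` paths in `X` with a common initial point.  This is the
space `X^{J_n}` of continuous maps from the wedge `J_n` of `n` unit intervals to `X`. -/
abbrev MultiPath (n : ℕ) (X : Type*) [TopologicalSpace X] :=
  {f : Fin n → C(unitInterval, X) // ∀ i j : Fin n, f i 0 = f j 0}

/-- The endpoint-evaluation fibration `e_n : X^{J_n} → X^n`. -/
def endpointsMap (n : ℕ) (X : Type*) [TopologicalSpace X] :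
    C(MultiPath n X, Fin n → X) :=
  ⟨fun f i => f.1 i 1, by
    apply continuous_pi
    intro i
    exact (continuous_eval_const (1 : unitInterval) :
        Continuous fun g : C(unitInterval, X) => g 1).comp
      ((continuous_apply i).comp continuous_subtype_val)⟩

/-- The diagonal map `d_n : X → X^n`. -/
def diagMap (n : ℕ) (X : Type*) [TopologicalSpace X] : C(X, Fin n → X) :=
  ⟨fun x _ => x, continuous_pi fun _ => continuous_id⟩

/-- `secatLE p k` : the base of `p` can be covered by `k+1` open sets, each admitting a
continuous (strict) local section of `p`. -/
def secatLE {E B : Type*} [TopologicalSpace E] [TopologicalSpace B]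
    (p : C(E, B)) (k : ℕ) : Prop :=
  ∃ U : Fin (k + 1) → Set B, (∀ i, IsOpen (U i)) ∧ (⋃ i, U i) = Set.univ ∧
    ∀ i, ∃ s : C(U i, E), ∀ x : U i, p (s x) = (x : B)

/-- The (normalized) sectional category / Schwarz genus of a fibration, via strict local
sections. -/
def secat {E B : Type*} [TopologicalSpace E] [TopologicalSpace B] (p : C(E, B)) : ℕ∞ :=
  sInf ((fun k : ℕ => (k : ℕ∞)) '' {k | secatLE p k})

/-- `genusLE f k` : the target of `f` can be covered by `k+1` open sets, each admitting a
continuous local homotopy section of `f` (this computes the Schwarz genus of an arbitrary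
map, i.e. of its fibrational substitute). -/
def genusLE {E B : Type*} [TopologicalSpace E] [TopologicalSpace B]
    (f : C(E, B)) (k : ℕ) : Prop :=
  ∃ U : Fin (k + 1) → Set B, (∀ i, IsOpen (U i)) ∧ (⋃ i, U i) = Set.univ ∧
    ∀ i, ∃ s : C(U i, E), ContinuousMap.Homotopic (f.comp s)
      ⟨fun x : U i => (x : B), continuous_subtype_val⟩

/-- The (normalized) Schwarz genus of an arbitrary continuous map, defined via local
homotopy sections (equivalently, via a fibrational substitute). -/
def schwarzGenus {E B : Type*} [TopologicalSpace E] [TopologicalSpace B] (f : C(E, B)) : ℕ∞ :=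
  sInf ((fun k : ℕ => (k : ℕ∞)) '' {k | genusLE f k})

/-- The `n`-th (normalized) topological complexity: the Schwarz genus of the endpoint
evaluation fibration `e_n : X^{J_n} → X^n`. -/
def TCn (n : ℕ) (X : Type*) [TopologicalSpace X] : ℕ∞ := secat (endpointsMap n X)

/-- `catLE Y k` : `Y` is covered by `k+1` open sets, each contractible in `Y`. -/
def catLE (Y : Type*) [TopologicalSpace Y] (k : ℕ) : Prop :=
  ∃ U : Fin (k + 1) → Set Y, (∀ i, IsOpen (U i)) ∧ (⋃ i, U i) = Set.univ ∧
    ∀ i, ∃ y : Y, ContinuousMap.Homotopic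
      ⟨fun x : U i => (x : Y), continuous_subtype_val⟩ (ContinuousMap.const _ y)

/-- The normalized Lusternik–Schnirelmann category. -/
def LScat (Y : Type*) [TopologicalSpace Y] : ℕ∞ :=
  sInf ((fun k : ℕ => (k : ℕ∞)) '' {k | catLE Y k})

/-- Glue continuous maps defined on a disjoint open cover. -/
theorem glue_of_disjoint_open_cover {B Z ι : Type*} [TopologicalSpace B] [TopologicalSpace Z]
    (Ω : ι → Set B) (hop : ∀ i, IsOpen (Ω i)) (hcov : ∀ x, ∃ i, x ∈ Ω i)
    (hdisj : ∀ i j x, x ∈ Ω i → x ∈ Ω j → i = j)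
    (g : ∀ i, C(Ω i, Z)) :
    ∃ G : C(B, Z), ∀ i (x : B) (h : x ∈ Ω i), G x = g i ⟨x, h⟩ := by
  classical
  choose idx hidx using hcov
  set Gf : B → Z := fun x => g (idx x) ⟨x, hidx x⟩ with hGf
  have hagree : ∀ i (x : B) (h : x ∈ Ω i), Gf x = g i ⟨x, h⟩ := by
    intro i x h
    obtain rfl : idx x = i := hdisj _ _ _ (hidx x) h
    rfl
  have hcont : Continuous Gf := by
    rw [continuous_iff_continuousAt]
    intro x
    have hmem : Ω (idx x) ∈ nhds x := (hop _).mem_nhds (hidx x)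
    have hco : ContinuousOn Gf (Ω (idx x)) := by
      rw [continuousOn_iff_continuous_restrict]
      have : (Ω (idx x)).restrict Gf = ⇑(g (idx x)) := by
        funext y
        exact hagree _ _ y.2
      rw [show (Ω (idx x)).domRestrict Gf = ⇑(g (idx x)) from this]
      exact (g (idx x)).continuous
    exact hco.continuousAt hmem
  exact ⟨⟨Gf, hcont⟩, hagree⟩

/-- Glue homotopy sections of a product map over a disjoint open cover of a set `W`. -/
theorem glue_homotopy_section {X Y X' Y' : Type*} [TopologicalSpace X] [TopologicalSpace Y]
    [TopologicalSpace X'] [TopologicalSpace Y'] (f : C(X, Y)) (f' : C(X', Y'))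
    (W : Set (Y × Y')) {σ : Type*} (Ω : σ → Set (Y × Y')) (hop : ∀ q, IsOpen (Ω q))
    (hcov : ∀ z ∈ W, ∃ q, z ∈ Ω q) (hdisj : ∀ q q' z, z ∈ Ω q → z ∈ Ω q' → q = q')
    (UU : σ → Set Y) (VV : σ → Set Y')
    (hsub : ∀ q z, z ∈ Ω q → z.1 ∈ UU q ∧ z.2 ∈ VV q)
    (s : ∀ q, C(UU q, X)) (t : ∀ q, C(VV q, X'))
    (hs : ∀ q, ContinuousMap.Homotopic (f.comp (s q))
      ⟨fun x : UU q => (x : Y), continuous_subtype_val⟩)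
    (ht : ∀ q, ContinuousMap.Homotopic (f'.comp (t q))
      ⟨fun x : VV q => (x : Y'), continuous_subtype_val⟩) :
    ∃ S : C(W, X × X'), ContinuousMap.Homotopic ((f.prodMap f').comp S)
      ⟨fun x : W => (x : Y × Y'), continuous_subtype_val⟩ := by
  classical
  have F : ∀ q, (f.comp (s q)).Homotopy ⟨fun x : UU q => (x : Y), continuous_subtype_val⟩ :=
    fun q => (hs q).some
  have F' : ∀ q, (f'.comp (t q)).Homotopy ⟨fun x : VV q => (x : Y'), continuous_subtype_val⟩ :=
    fun q => (ht q).some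
  -- the section, glued from pieces
  obtain ⟨G, hG⟩ := glue_of_disjoint_open_cover
    (B := W) (Z := X × X') (fun q => Subtype.val ⁻¹' Ω q)
    (fun q => (hop q).preimage continuous_subtype_val)
    (fun x => hcov x.1 x.2)
    (fun q q' x h h' => hdisj q q' x.1 h h')
    (fun q => ⟨fun z => (s q ⟨z.1.1.1, (hsub q _ z.2).1⟩, t q ⟨z.1.1.2, (hsub q _ z.2).2⟩), by
      apply Continuous.prodMk
      · exact (s q).continuous.comp (Continuous.subtype_mk
          (continuous_fst.comp (continuous_subtype_val.comp continuous_subtype_val)) _)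
      · exact (t q).continuous.comp (Continuous.subtype_mk
          (continuous_snd.comp (continuous_subtype_val.comp continuous_subtype_val)) _)⟩)
  -- the homotopy, glued from pieces
  obtain ⟨H, hH⟩ := glue_of_disjoint_open_cover
    (B := unitInterval × W) (Z := Y × Y')
    (fun q => (fun p : unitInterval × W => (p.2 : Y × Y')) ⁻¹' Ω q)
    (fun q => (hop q).preimage (continuous_subtype_val.comp continuous_snd))
    (fun p => hcov p.2.1 p.2.2)
    (fun q q' p h h' => hdisj q q' p.2.1 h h')
    (fun q => ⟨fun p => (F q (p.1.1, ⟨p.1.2.1.1, (hsub q _ p.2).1⟩),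
        F' q (p.1.1, ⟨p.1.2.1.2, (hsub q _ p.2).2⟩)), by
      apply Continuous.prodMk
      · exact (F q).continuous.comp (Continuous.prodMk
          (continuous_fst.comp continuous_subtype_val)
          (Continuous.subtype_mk (continuous_fst.comp (continuous_subtype_val.comp
            (continuous_snd.comp continuous_subtype_val))) _))
      · exact (F' q).continuous.comp (Continuous.prodMk
          (continuous_fst.comp continuous_subtype_val)
          (Continuous.subtype_mk (continuous_snd.comp (continuous_subtype_val.comp
            (continuous_snd.comp continuous_subtype_val))) _))⟩)
  refine ⟨G, ⟨⟨H, ?_, ?_⟩⟩⟩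
  · intro z
    obtain ⟨q, hq⟩ := hcov z.1 z.2
    have h2 : ((0 : unitInterval), z) ∈ (fun p : unitInterval × W => (p.2 : Y × Y')) ⁻¹' Ω q := hq
    simp only [ContinuousMap.toFun_eq_coe]
    rw [hH q ((0 : unitInterval), z) h2]
    simp only [ContinuousMap.comp_apply]
    rw [hG q z hq]
    simp only [ContinuousMap.coe_mk]
    rw [(F q).apply_zero, (F' q).apply_zero]
    rfl
  · intro z
    obtain ⟨q, hq⟩ := hcov z.1 z.2
    have h2 : ((1 : unitInterval), z) ∈ (fun p : unitInterval × W => (p.2 : Y × Y')) ⁻¹' Ω q := hq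
    simp only [ContinuousMap.toFun_eq_coe]
    rw [hH q ((1 : unitInterval), z) h2]
    simp only [ContinuousMap.coe_mk]
    rw [(F q).apply_one, (F' q).apply_one]
    rfl

/-- In a nonempty `Fin` type, any real-valued function has a largest maximizer. -/
theorem exists_argmax {κ : ℕ} (w : Fin (κ + 1) → ℝ) :
    ∃ iₘ, (∀ a, w a ≤ w iₘ) ∧ ∀ a, (∀ c, w c ≤ w a) → a ≤ iₘ := by
  classical
  have hAne : (Finset.univ.filter (fun i : Fin (κ + 1) => ∀ a, w a ≤ w i)).Nonempty := by
    obtain ⟨i, -, hi⟩ := Finset.exists_max_image Finset.univ w ⟨0, Finset.mem_univ _⟩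
    exact ⟨i, Finset.mem_filter.2 ⟨Finset.mem_univ _, fun a => hi a (Finset.mem_univ a)⟩⟩
  exact ⟨_, (Finset.mem_filter.1 (Finset.max'_mem _ hAne)).2,
    fun a ha => Finset.le_max' _ a (Finset.mem_filter.2 ⟨Finset.mem_univ _, ha⟩)⟩

theorem genusLE_prodMap_aux {X Y X' Y' : Type*} [TopologicalSpace X] [TopologicalSpace Y]
    [TopologicalSpace X'] [TopologicalSpace Y'] [NormalSpace (Y × Y')]
    (f : C(X, Y)) (f' : C(X', Y')) {n m : ℕ}
    (hf : genusLE f n) (hf' : genusLE f' m) : genusLE (f.prodMap f') (n + m) := by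
  classical
  obtain ⟨U, hUo, hUc, hUs⟩ := hf
  obtain ⟨V, hVo, hVc, hVs⟩ := hf'
  choose s hs using hUs
  choose t ht using hVs
  -- partitions of unity on the product, subordinate to the fattened covers
  obtain ⟨pu, hpu⟩ := PartitionOfUnity.exists_isSubordinate_of_locallyFinite
    (X := Y × Y') isClosed_univ (fun i => {z : Y × Y' | z.1 ∈ U i})
    (fun i => (hUo i).preimage continuous_fst) (locallyFinite_of_finite _)
    (by
      intro z _
      have : z.1 ∈ ⋃ i, U i := hUc ▸ Set.mem_univ _
      obtain ⟨i, hi⟩ := Set.mem_iUnion.1 this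
      exact Set.mem_iUnion.2 ⟨i, hi⟩)
  obtain ⟨pv, hpv⟩ := PartitionOfUnity.exists_isSubordinate_of_locallyFinite
    (X := Y × Y') isClosed_univ (fun j => {z : Y × Y' | z.2 ∈ V j})
    (fun j => (hVo j).preimage continuous_snd) (locallyFinite_of_finite _)
    (by
      intro z _
      have : z.2 ∈ ⋃ j, V j := hVc ▸ Set.mem_univ _
      obtain ⟨j, hj⟩ := Set.mem_iUnion.1 this
      exact Set.mem_iUnion.2 ⟨j, hj⟩)
  have hpuU : ∀ i (z : Y × Y'), 0 < pu i z → z.1 ∈ U i := by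
    intro i z hz
    exact hpu i (subset_closure (by simpa [Function.mem_support] using hz.ne'))
  have hpvV : ∀ j (z : Y × Y'), 0 < pv j z → z.2 ∈ V j := by
    intro j z hz
    exact hpv j (subset_closure (by simpa [Function.mem_support] using hz.ne'))
  -- the basic open sets
  set Ω : Fin (n + 1) → Fin (m + 1) → Set (Y × Y') := fun i j =>
    {z | 0 < pu i z ∧ 0 < pv j z ∧ ∀ (a : Fin (n + 1)) (b : Fin (m + 1)),
      (a : ℕ) + (b : ℕ) = (i : ℕ) + (j : ℕ) →
      (a, b) ≠ (i, j) → pu a z * pv b z < pu i z * pv j z} with hΩdef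
  have hΩo : ∀ i j, IsOpen (Ω i j) := by
    intro i j
    have h3 : ∀ (a : Fin (n + 1)) (b : Fin (m + 1)),
        IsOpen {z : Y × Y' | (a : ℕ) + (b : ℕ) = (i : ℕ) + (j : ℕ) → (a, b) ≠ (i, j) →
          pu a z * pv b z < pu i z * pv j z} := by
      intro a b
      by_cases hab : (a : ℕ) + (b : ℕ) = (i : ℕ) + (j : ℕ) ∧ (a, b) ≠ (i, j)
      · have he : {z : Y × Y' | (a : ℕ) + (b : ℕ) = (i : ℕ) + (j : ℕ) → (a, b) ≠ (i, j) →
            pu a z * pv b z < pu i z * pv j z}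
            = {z : Y × Y' | pu a z * pv b z < pu i z * pv j z} := by
          ext z; simp [hab.1, hab.2]
        rw [he]
        exact isOpen_lt ((pu a).continuous.mul (pv b).continuous)
          ((pu i).continuous.mul (pv j).continuous)
      · have he : {z : Y × Y' | (a : ℕ) + (b : ℕ) = (i : ℕ) + (j : ℕ) → (a, b) ≠ (i, j) →
            pu a z * pv b z < pu i z * pv j z} = Set.univ := by
          ext z
          simp only [Set.mem_setOf_eq, Set.mem_univ, iff_true]
          intro h1 h2
          exact absurd ⟨h1, h2⟩ hab
        rw [he]
        exact isOpen_univ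
    have he : Ω i j = {z : Y × Y' | 0 < pu i z} ∩ ({z : Y × Y' | 0 < pv j z} ∩
        ⋂ a : Fin (n + 1), ⋂ b : Fin (m + 1),
        {z : Y × Y' | (a : ℕ) + (b : ℕ) = (i : ℕ) + (j : ℕ) → (a, b) ≠ (i, j) →
          pu a z * pv b z < pu i z * pv j z}) := by
      ext z
      simp only [hΩdef, Set.mem_setOf_eq, Set.mem_inter_iff, Set.mem_iInter]
    rw [he]
    exact (isOpen_lt continuous_const (pu i).continuous).inter
      ((isOpen_lt continuous_const (pv j).continuous).inter
        (isOpen_iInter_of_finite fun a => isOpen_iInter_of_finite fun b => h3 a b))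
  -- covering
  have hcov : ∀ z : Y × Y', ∃ i j, z ∈ Ω i j := by
    intro z
    obtain ⟨i0, hi0⟩ := pu.exists_pos (Set.mem_univ z)
    obtain ⟨j0, hj0⟩ := pv.exists_pos (Set.mem_univ z)
    obtain ⟨istar, histar, histar'⟩ := exists_argmax (fun i => pu i z)
    obtain ⟨jstar, hjstar, hjstar'⟩ := exists_argmax (fun j => pv j z)
    have hpi : 0 < pu istar z := lt_of_lt_of_le hi0 (histar i0)
    have hpj : 0 < pv jstar z := lt_of_lt_of_le hj0 (hjstar j0)
    refine ⟨istar, jstar, hpi, hpj, ?_⟩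
    intro a b hsum hne
    have h1 := histar a
    have h2 := hjstar b
    have e2 : pu a z * pv b z ≤ pu istar z * pv b z :=
      mul_le_mul_of_nonneg_right h1 (pv.nonneg b z)
    have e1 : pu istar z * pv b z ≤ pu istar z * pv jstar z :=
      mul_le_mul_of_nonneg_left h2 hpi.le
    rcases lt_or_eq_of_le (e2.trans e1) with hlt | heq
    · exact hlt
    · exfalso
      have hprodpos : 0 < pu a z * pv b z := heq ▸ mul_pos hpi hpj
      have hbpos : 0 < pv b z := by
        rcases (pv.nonneg b z).lt_or_eq with h | h
        · exact h
        · rw [← h, mul_zero] at hprodpos; exact absurd hprodpos (lt_irrefl 0)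
      have hae : pu a z = pu istar z := by
        have he' : pu a z * pv b z = pu istar z * pv b z := le_antisymm e2 (by linarith)
        exact mul_right_cancel₀ hbpos.ne' he'
      have hbe : pv b z = pv jstar z := by
        have he' : pu istar z * pv b z = pu istar z * pv jstar z := le_antisymm e1 (by linarith)
        exact mul_left_cancel₀ hpi.ne' he'
      have ha_le : a ≤ istar := histar' a (fun c => hae ▸ histar c)
      have hb_le : b ≤ jstar := hjstar' b (fun c => hbe ▸ hjstar c)
      have ha_le' : (a : ℕ) ≤ (istar : ℕ) := ha_le
      have hb_le' : (b : ℕ) ≤ (jstar : ℕ) := hb_le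
      apply hne
      have hae' : (a : ℕ) = (istar : ℕ) := by omega
      have hbe' : (b : ℕ) = (jstar : ℕ) := by omega
      exact Prod.ext (Fin.ext hae') (Fin.ext hbe')
  -- disjointness along antidiagonals
  have hdisjΩ : ∀ (i a : Fin (n + 1)) (j b : Fin (m + 1)) (z : Y × Y'),
      (i : ℕ) + (j : ℕ) = (a : ℕ) + (b : ℕ) → z ∈ Ω i j → z ∈ Ω a b → (i, j) = (a, b) := by
    intro i a j b z hsum h1 h2
    by_contra hne
    have l1 := h1.2.2 a b hsum.symm (Ne.symm hne)
    have l2 := h2.2.2 i j hsum hne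
    exact absurd (l1.trans l2) (lt_irrefl _)
  refine ⟨fun k => ⋃ (i : Fin (n + 1)), ⋃ (j : Fin (m + 1)),
    ⋃ (_ : (i : ℕ) + (j : ℕ) = (k : ℕ)), Ω i j, ?_, ?_, ?_⟩
  · intro k
    exact isOpen_iUnion fun i => isOpen_iUnion fun j => isOpen_iUnion fun _ => hΩo i j
  · apply Set.eq_univ_of_forall
    intro z
    obtain ⟨i, j, hij⟩ := hcov z
    have hk : (i : ℕ) + (j : ℕ) < n + m + 1 := by
      have := i.isLt; have := j.isLt; omega
    exact Set.mem_iUnion.2 ⟨⟨(i : ℕ) + (j : ℕ), hk⟩, Set.mem_iUnion.2 ⟨i,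
      Set.mem_iUnion.2 ⟨j, Set.mem_iUnion.2 ⟨rfl, hij⟩⟩⟩⟩
  · intro k
    refine glue_homotopy_section f f' _
      (σ := {q : Fin (n + 1) × Fin (m + 1) // (q.1 : ℕ) + (q.2 : ℕ) = (k : ℕ)})
      (fun q => Ω q.1.1 q.1.2) (fun q => hΩo _ _) ?_ ?_
      (fun q => U q.1.1) (fun q => V q.1.2) ?_ (fun q => s q.1.1) (fun q => t q.1.2)
      (fun q => hs q.1.1) (fun q => ht q.1.2)
    · intro z hz
      simp only [Set.mem_iUnion] at hz
      obtain ⟨i, j, hsum, hmem⟩ := hz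
      exact ⟨⟨(i, j), hsum⟩, hmem⟩
    · intro q q' z h h'
      apply Subtype.ext
      exact hdisjΩ _ _ _ _ z (q.2.trans q'.2.symm) h h'
    · intro q z hz
      obtain ⟨hz1, hz2, -⟩ := hz
      exact ⟨hpuU _ _ hz1, hpvV _ _ hz2⟩

/-- Subadditivity of the Schwarz genus for products: if `Y × Y'` is a normal
(Hausdorff) space then `genus(f × f') ≤ genus(f) + genus(f')`. -/
theorem genus_prodMap_le {X Y X' Y' : Type*} [TopologicalSpace X] [TopologicalSpace Y]
    [TopologicalSpace X'] [TopologicalSpace Y'] [NormalSpace (Y × Y')] [T2Space (Y × Y')]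
    (f : C(X, Y)) (f' : C(X', Y')) :
    schwarzGenus (f.prodMap f') ≤ schwarzGenus f + schwarzGenus f' := by
  rcases Set.eq_empty_or_nonempty {k | genusLE f k} with hS | hS
  · have h : schwarzGenus f = ⊤ := by
      rw [schwarzGenus, hS]
      simp
    rw [h, top_add]
    exact le_top
  rcases Set.eq_empty_or_nonempty {k | genusLE f' k} with hS' | hS'
  · have h : schwarzGenus f' = ⊤ := by
      rw [schwarzGenus, hS']
      simp
    rw [h, add_top]
    exact le_top
  have hn : genusLE f (sInf {k | genusLE f k}) := Nat.sInf_mem hS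
  have hm : genusLE f' (sInf {k | genusLE f' k}) := Nat.sInf_mem hS'
  set n := sInf {k | genusLE f k}
  set m := sInf {k | genusLE f' k}
  have h1 : schwarzGenus (f.prodMap f') ≤ ((n + m : ℕ) : ℕ∞) :=
    sInf_le ⟨n + m, genusLE_prodMap_aux f f' hn hm, rfl⟩
  have h2 : ((n : ℕ) : ℕ∞) ≤ schwarzGenus f := by
    apply le_sInf
    rintro x ⟨k, hk, rfl⟩
    simp only []
    exact_mod_cast Nat.sInf_le hk
  have h3 : ((m : ℕ) : ℕ∞) ≤ schwarzGenus f' := by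
    apply le_sInf
    rintro x ⟨k, hk, rfl⟩
    simp only []
    exact_mod_cast Nat.sInf_le hk
  calc schwarzGenus (f.prodMap f') ≤ ((n + m : ℕ) : ℕ∞) := h1
    _ = ((n : ℕ) : ℕ∞) + ((m : ℕ) : ℕ∞) := by push_cast; rfl
    _ ≤ schwarzGenus f + schwarzGenus f' := add_le_add h2 h3
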